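/- arXiv:math/0402262 — 3 statements merged into one kernel-verified Lean document; each statement's English description precedes it below -/
import Mathlib

section
/- Let ω = √(1−ε) with 0 < ε small, and let (ω̃_m)_{m≥1} satisfy |ω̃_m − |m|| ≤ C₁ε/|m| for some constant C₁ > 0. If nonzero integers n, m with |n| ≠ |m| satisfy ||ω n| − ω̃_m| ≤ C₀ < 1/2, then |n| ≥ 1/(2ε) and |m| > 1/(2ε). -/
theorem sd_arith (ε C₀ u : ℝ) (hε : 0 < ε) (hε4 : ε < 1/4) (hC₀ : 0 < C₀)
    (hC₀' : C₀ < 1/2) (hu : 0 < u) (hu2 : u < (1/2 - C₀)/4) :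
    (1 - ε) * ((2 - ε) * (1 - C₀ - u)) > 1/2 + ε*C₀ + ε*u := by
  have h1 : 1 - C₀ - u > 1/2 + 3*(1/2 - C₀)/4 := by linarith
  have h2 : (1 - ε) * (2 - ε) > 21/16 := by nlinarith
  have h3 : (1 - ε) * ((2 - ε) * (1 - C₀ - u)) > (21/16) * (1/2 + 3*(1/2 - C₀)/4) := by
    calc (1 - ε) * ((2 - ε) * (1 - C₀ - u)) = ((1-ε)*(2-ε)) * (1 - C₀ - u) := by ring
    _ > (21/16) * (1/2 + 3*(1/2 - C₀)/4) := by nlinarith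
  nlinarith

theorem sd_aux (C₀ C₁ ε w N M x : ℝ) (hC₀ : 0 < C₀) (hC₀' : C₀ < 1/2)
    (hC₁ : 0 < C₁) (hε : 0 < ε) (hε4 : ε < 1/4) (hC1e : C₁ * ε < (1/2 - C₀)/4)
    (hw0 : 0 ≤ w) (hw2 : w^2 = 1 - ε) (hN1 : 1 ≤ N) (hM1 : 1 ≤ M)
    (ha1 : w*N - x ≤ C₀) (ha2 : x - w*N ≤ C₀)
    (hb1 : x - M ≤ C₁*ε) (hb2 : M - x ≤ C₁*ε)
    (hcase : N ≥ M + 1 ∨ M ≥ N + 1) :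
    1/(2*ε) ≤ N ∧ 1/(2*ε) < M := by
  have hwle : w ≤ 1 := by nlinarith
  have hwge : 1 - ε ≤ w := by nlinarith
  rcases hcase with hc | hc
  · have key : (1 - w) * N ≥ 1 - C₀ - C₁ * ε := by nlinarith
    have hNlow : ε * N ≥ 1 - C₀ - C₁ * ε := by nlinarith
    have hNgoal : 1 / (2*ε) ≤ N := by
      rw [div_le_iff₀ (by positivity)]
      nlinarith
    refine ⟨hNgoal, ?_⟩
    have h2e : (0:ℝ) < 2 - ε := by linarith
    have hq : (1 - w) * (2 - ε) ≤ ε := by nlinarith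
    have hNlow2 : (2 - ε) * (1 - C₀ - C₁ * ε) ≤ ε * N := by nlinarith
    have hMlow : (1 - ε) * N - C₀ - C₁ * ε ≤ M := by nlinarith
    rw [div_lt_iff₀ (by positivity)]
    have hA : ε * ((1 - ε) * N - C₀ - C₁ * ε) ≤ ε * M :=
      mul_le_mul_of_nonneg_left hMlow hε.le
    have hB : (1 - ε) * ((2 - ε) * (1 - C₀ - C₁ * ε)) ≤ (1 - ε) * (ε * N) :=
      mul_le_mul_of_nonneg_left hNlow2 (by linarith)
    have hArith := sd_arith ε C₀ (C₁ * ε) hε hε4 hC₀ hC₀' (by positivity) hC1e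
    linarith
  · exfalso
    nlinarith [mul_le_mul_of_nonneg_right hwle (by linarith : (0:ℝ) ≤ N)]

theorem small_divisor_localization
    (C₀ C₁ : ℝ) (hC₀ : 0 < C₀) (hC₀' : C₀ < 1/2) (hC₁ : 0 < C₁) :
    ∃ ε₀ > (0:ℝ), ∀ ε : ℝ, 0 < ε → ε < ε₀ →
      ∀ ω' : ℤ → ℝ, (∀ m : ℤ, m ≠ 0 → abs (ω' m - |(m:ℝ)|) ≤ C₁ * ε / |(m:ℝ)|) →
      ∀ n m : ℤ, n ≠ 0 → m ≠ 0 → |n| ≠ |m| →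
        |(|Real.sqrt (1 - ε) * (n:ℝ)|) - ω' m| ≤ C₀ →
        1 / (2*ε) ≤ |(n:ℝ)| ∧ 1 / (2*ε) < |(m:ℝ)| := by
  refine ⟨min (1/4) ((1/2 - C₀) / (8*(C₁+1))), ?_, ?_⟩
  · have h1 : (0:ℝ) < (1/2 - C₀) / (8*(C₁+1)) := by
      have : (0:ℝ) < 1/2 - C₀ := by linarith
      positivity
    exact lt_min (by norm_num) h1
  intro ε hε hεlt ω' hω' n m hn hm hnm hdiv
  have hε4 : ε < 1/4 := lt_of_lt_of_le hεlt (min_le_left _ _)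
  have hεs : ε < (1/2 - C₀) / (8*(C₁+1)) := lt_of_lt_of_le hεlt (min_le_right _ _)
  have hC1e : C₁ * ε < (1/2 - C₀)/4 := by
    have h8 : (0:ℝ) < 8*(C₁+1) := by positivity
    rw [lt_div_iff₀ h8] at hεs
    nlinarith
  have h1e : (0:ℝ) < 1 - ε := by linarith
  have hw0 : (0:ℝ) ≤ Real.sqrt (1 - ε) := Real.sqrt_nonneg _
  have hw2 : (Real.sqrt (1 - ε))^2 = 1 - ε := Real.sq_sqrt h1e.le
  have hN1 : (1:ℝ) ≤ |(n:ℝ)| := by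
    have h : (1:ℤ) ≤ |n| := Int.one_le_abs (by exact_mod_cast hn)
    rw [← Int.cast_abs]; exact_mod_cast h
  have hM1 : (1:ℝ) ≤ |(m:ℝ)| := by
    have h : (1:ℤ) ≤ |m| := Int.one_le_abs (by exact_mod_cast hm)
    rw [← Int.cast_abs]; exact_mod_cast h
  have hwn : |Real.sqrt (1 - ε) * (n:ℝ)| = Real.sqrt (1 - ε) * |(n:ℝ)| := by
    rw [abs_mul, abs_of_nonneg hw0]
  rw [hwn] at hdiv
  have ha := abs_le.mp hdiv
  have hmb := hω' m hm
  have hmb' : abs (ω' m - |(m:ℝ)|) ≤ C₁ * ε := by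
    refine le_trans hmb ?_
    exact div_le_self (by positivity) hM1
  have hb := abs_le.mp hmb'
  have hcase : |(n:ℝ)| ≥ |(m:ℝ)| + 1 ∨ |(m:ℝ)| ≥ |(n:ℝ)| + 1 := by
    rcases lt_or_gt_of_ne hnm with h | h
    · right
      have h' : |n| + 1 ≤ |m| := h
      rw [← Int.cast_abs, ← Int.cast_abs]
      exact_mod_cast h'
    · left
      have h' : |m| + 1 ≤ |n| := h
      rw [← Int.cast_abs, ← Int.cast_abs]
      exact_mod_cast h'
  exact sd_aux C₀ C₁ ε (Real.sqrt (1 - ε)) |(n:ℝ)| |(m:ℝ)| (ω' m) hC₀ hC₀' hC₁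
    hε hε4 hC1e hw0 hw2 hN1 hM1 (by linarith [ha.2]) (by linarith [ha.1])
    (by linarith [hb.2]) (by linarith [hb.1]) hcase
end

section
/- Let ω > 0, let (ω̃_m)_{m∈ℤ∖{0}} be even in m (ω̃_{−m} = ω̃_m), and suppose the second Melnikov conditions |ωn ± (ω̃_m ± ω̃_{m'})| ≥ C₀|n|^{−τ} hold for all n ≠ 0 and all m, m' ≠ 0 with |n| ≠ |m ± m'|. If nonzero integers n_ℓ, m_ℓ, n_{ℓ₁}, m_{ℓ₁} satisfy n_ℓ ≠ n_{ℓ₁}, |n_ℓ − n_{ℓ₁}| ≠ |m_ℓ ± m_{ℓ₁}| (both signs), ||ωn_ℓ| − ω̃_{m_ℓ}| ≤ 2^{−h+1}C₀ and ||ωn_{ℓ₁}| − ω̃_{m_{ℓ₁}}| ≤ 2^{−h+1}C₀, then |n_ℓ − n_{ℓ₁}| ≥ (2^{h−2})^{1/τ}. -/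
theorem second_melnikov_separation (ω C₀ τ : ℝ) (hω : 0 < ω) (hC₀ : 0 < C₀) (hτ : 0 < τ)
    (ω' : ℤ → ℝ) (heven : ∀ m : ℤ, ω' (-m) = ω' m)
    (hmel : ∀ (n m m' σ σ' : ℤ), n ≠ 0 → m ≠ 0 → m' ≠ 0 →
      (σ = 1 ∨ σ = -1) → (σ' = 1 ∨ σ' = -1) → |n| ≠ |m + σ' * m'| →
      C₀ * |(n:ℝ)| ^ (-τ) ≤ |ω * (n:ℝ) + (σ:ℝ) * (ω' m + (σ':ℝ) * ω' m')|) :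
    ∀ (nl ml nl1 ml1 : ℤ) (h : ℕ),
      nl ≠ 0 → ml ≠ 0 → nl1 ≠ 0 → ml1 ≠ 0 →
      nl ≠ nl1 →
      |nl - nl1| ≠ |ml + ml1| → |nl - nl1| ≠ |ml - ml1| →
      abs (|ω * (nl:ℝ)| - ω' ml) ≤ 2 * C₀ / 2^h →
      abs (|ω * (nl1:ℝ)| - ω' ml1) ≤ 2 * C₀ / 2^h →
      ((2:ℝ)^h / 4) ^ (1/τ) ≤ |(nl:ℝ) - (nl1:ℝ)| := by
  intro nl ml nl1 ml1 h hnl hml hnl1 hml1 hne hd1 hd2 hb hb1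
  -- signed versions of the two bounds
  have sign_bound : ∀ n : ℤ, n ≠ 0 → ∀ m : ℤ,
      abs (|ω * (n:ℝ)| - ω' m) ≤ 2 * C₀ / 2^h →
      ∃ s : ℤ, (s = 1 ∨ s = -1) ∧ |ω * (n:ℝ) - (s:ℝ) * ω' m| ≤ 2 * C₀ / 2^h := by
    intro n hn m hbd
    rcases lt_or_gt_of_ne hn with h' | h'
    · refine ⟨-1, Or.inr rfl, ?_⟩
      have hneg : ω * (n:ℝ) < 0 :=
        mul_neg_of_pos_of_neg hω (by exact_mod_cast h')
      have habs : |ω * (n:ℝ)| = -(ω * (n:ℝ)) := abs_of_neg hneg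
      rw [habs] at hbd
      have : ω * (n:ℝ) - ((-1 : ℤ):ℝ) * ω' m = -(-(ω * (n:ℝ)) - ω' m) := by
        push_cast; ring
      rw [this, abs_neg]; exact hbd
    · refine ⟨1, Or.inl rfl, ?_⟩
      have hpos : 0 < ω * (n:ℝ) :=
        mul_pos hω (by exact_mod_cast h')
      have habs : |ω * (n:ℝ)| = ω * (n:ℝ) := abs_of_pos hpos
      rw [habs] at hbd
      simpa using hbd
  obtain ⟨s, hs, hA⟩ := sign_bound nl hnl ml hb
  obtain ⟨s1, hs1, hB⟩ := sign_bound nl1 hnl1 ml1 hb1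
  have hss : (s:ℝ) * s = 1 := by rcases hs with rfl | rfl <;> norm_num
  have hnsub : nl - nl1 ≠ 0 := sub_ne_zero.mpr hne
  -- apply Melnikov with σ = -s, σ' = -(s1*s)
  have hmelkey : C₀ * |((nl - nl1 : ℤ):ℝ)| ^ (-τ) ≤ 4 * C₀ / 2^h := by
    have hσ' : (-(s1*s) = 1 ∨ -(s1*s) = -1) := by
      rcases hs with rfl | rfl <;> rcases hs1 with rfl | rfl <;> simp
    have hdiff : |nl - nl1| ≠ |ml + -(s1*s) * ml1| := by
      rcases hs with rfl | rfl <;> rcases hs1 with rfl | rfl <;>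
        simpa [sub_eq_add_neg] using (by assumption : _)
    have hm := hmel (nl - nl1) ml ml1 (-s) (-(s1*s)) hnsub hml hml1
      (by rcases hs with rfl | rfl <;> simp) hσ' hdiff
    have expand : ω * ((nl - nl1 : ℤ):ℝ) + ((-s : ℤ):ℝ) * (ω' ml + ((-(s1*s) : ℤ):ℝ) * ω' ml1)
        = (ω * (nl:ℝ) - (s:ℝ) * ω' ml) - (ω * (nl1:ℝ) - (s1:ℝ) * ω' ml1) := by
      push_cast
      linear_combination ((s1:ℝ) * ω' ml1) * hss
    rw [expand] at hm
    calc C₀ * |((nl - nl1 : ℤ):ℝ)| ^ (-τ) ≤ _ := hm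
      _ ≤ |ω * (nl:ℝ) - (s:ℝ) * ω' ml| + |ω * (nl1:ℝ) - (s1:ℝ) * ω' ml1| := abs_sub _ _
      _ ≤ 2 * C₀ / 2^h + 2 * C₀ / 2^h := add_le_add hA hB
      _ = 4 * C₀ / 2^h := by ring
  -- arithmetic: deduce the separation
  set N : ℝ := |(nl:ℝ) - (nl1:ℝ)| with hN
  have hcast : |((nl - nl1 : ℤ):ℝ)| = N := by push_cast; rfl
  rw [hcast] at hmelkey
  have hNpos : 0 < N := abs_pos.mpr (sub_ne_zero.mpr (by exact_mod_cast hne))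
  have h2h : (0:ℝ) < 2^h := by positivity
  have h1 : N ^ (-τ) ≤ 4 / 2^h := by
    rw [le_div_iff₀ h2h]
    nlinarith [(le_div_iff₀ h2h).mp hmelkey, hC₀]
  have hinv : N ^ (-τ) = (N ^ τ)⁻¹ := by rw [Real.rpow_neg hNpos.le]
  rw [hinv] at h1
  have hNτpos : 0 < N ^ τ := Real.rpow_pos_of_pos hNpos τ
  have hNτ : 2^h / 4 ≤ N ^ τ := by
    have h2 := inv_anti₀ (inv_pos.mpr hNτpos) h1
    rwa [inv_inv, inv_div] at h2
  have final : (2^h / 4 : ℝ) ^ (1/τ) ≤ (N ^ τ) ^ (1/τ) :=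
    Real.rpow_le_rpow (by positivity) hNτ (by positivity)
  rwa [← Real.rpow_mul hNpos.le, mul_one_div, div_self hτ.ne', Real.rpow_one] at final
end

section
/- Let ω = √(1−ε) with 0 < ε < 1, 0 < C₀ ≤ 1/2, and suppose nonzero integers n, m with |n| ≠ |m| satisfy |ω²n² − ω̃_m²| < C₀/6 where |ω̃_m − |m|| ≤ C₁ε/|m|. Then |n| > |m| > (3/4)|n|, min{|m|,|n|} > 1/(2ε), and ||ω|n|| − ω̃_m| < C₀/(6|n|). -/
lemma int_abs_sum_le (n m : ℤ) (h : |n| ≠ |m|) : |n| + |m| ≤ |n^2 - m^2| := by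
  have h1 : 1 ≤ |(|n| - |m|)| := Int.one_le_abs (sub_ne_zero.mpr h)
  have h2 : n^2 - m^2 = (|n| - |m|) * (|n| + |m|) := by
    nlinarith [sq_abs n, sq_abs m]
  have h3 : (0:ℤ) ≤ |n| + |m| := add_nonneg (abs_nonneg n) (abs_nonneg m)
  calc |n| + |m| = 1 * (|n| + |m|) := (one_mul _).symm
    _ ≤ |(|n| - |m|)| * (|n| + |m|) := mul_le_mul_of_nonneg_right h1 h3
    _ = |(|n| - |m|) * (|n| + |m|)| := by rw [abs_mul, abs_of_nonneg h3]
    _ = |n^2 - m^2| := by rw [← h2]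

lemma aux_he (M w c : ℝ) (hM : 1 ≤ M) (hc0 : 0 ≤ c) (hc : c ≤ 1/100)
    (h1 : -(c/M) ≤ w - M) (h2 : w - M ≤ c/M) :
    M^2 - 3/100 ≤ w^2 ∧ w^2 ≤ M^2 + 3/100 := by
  have hM0 : (0:ℝ) < M := by linarith
  have hMb : M * (c/M) = c := by field_simp
  have hb' : c/M ≤ c := div_le_self hc0 hM
  have hb0 : (0:ℝ) ≤ c/M := by positivity
  constructor <;> nlinarith [sq_nonneg (w - M), mul_pos hM0 hM0]

lemma aux_MN (M N : ℝ) (hM : 1 ≤ M) (hN : 1 ≤ N) (h : N + M ≤ N^2 - M^2) : M < N := by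
  nlinarith

lemma aux_eN (N ε : ℝ) (hN : 2 ≤ N) (hε : 0 < ε) (h : N + 5/6 ≤ ε*N^2) :
    1 < ε*N ∧ 1 < N*(2*ε) := by
  constructor <;> nlinarith

lemma aux_34 (M N ε : ℝ) (hM : 1 ≤ M) (hN : 2 ≤ N) (hε : 0 < ε) (hεa : ε < 1/100)
    (h : N^2 - M^2 ≤ ε*N^2 + 1/6) : 3/4*N < M := by
  nlinarith [mul_le_mul_of_nonneg_right hεa.le (sq_nonneg N),
    (by linarith : (0:ℝ) ≤ 3/4*N + M)]

lemma aux_final (x S N c : ℝ) (hx : 0 ≤ x) (hN : 0 < N) (hS : N ≤ S) (h : x * S < c/6) :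
    x * (6*N) < c := by nlinarith

set_option maxHeartbeats 1000000 in
theorem localization_refined (C₀ C₁ : ℝ) (hC₀ : 0 < C₀) (hC₀' : C₀ ≤ 1/2) (hC₁ : 0 < C₁) :
    ∃ ε₀ > (0:ℝ), ∀ ε : ℝ, 0 < ε → ε < ε₀ → ε < 1 →
      ∀ ω' : ℤ → ℝ, (∀ m : ℤ, m ≠ 0 → abs (ω' m - |(m:ℝ)|) ≤ C₁ * ε / |(m:ℝ)|) →
      ∀ n m : ℤ, n ≠ 0 → m ≠ 0 → |n| ≠ |m| →
        |(Real.sqrt (1-ε))^2 * (n:ℝ)^2 - (ω' m)^2| < C₀/6 →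
        (|(m:ℝ)| < |(n:ℝ)| ∧ (3/4) * |(n:ℝ)| < |(m:ℝ)|) ∧
        (1/(2*ε) < |(m:ℝ)| ∧ 1/(2*ε) < |(n:ℝ)|) ∧
        |Real.sqrt (1-ε) * |(n:ℝ)| - ω' m| < C₀ / (6 * |(n:ℝ)|) := by
  refine ⟨min (1/100) (1/(100*C₁)), by positivity, ?_⟩
  intro ε hε hεlt hε1 ω' hω' n m hn0 hm0 hnm hsmall
  have hεa : ε < 1/100 := lt_of_lt_of_le hεlt (min_le_left _ _)
  have hεb : C₁ * ε < 1/100 := by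
    have h := lt_of_lt_of_le hεlt (min_le_right _ _)
    rw [lt_div_iff₀ (by positivity)] at h
    nlinarith
  have hM1 : (1:ℝ) ≤ |(m:ℝ)| := by exact_mod_cast Int.one_le_abs hm0
  have hN1 : (1:ℝ) ≤ |(n:ℝ)| := by exact_mod_cast Int.one_le_abs hn0
  have hδ := hω' m hm0
  obtain ⟨hδl, hδr⟩ := abs_le.mp hδ
  have hMM : |(m:ℝ)|^2 = (m:ℝ)^2 := sq_abs _
  have hNN : |(n:ℝ)|^2 = (n:ℝ)^2 := sq_abs _
  obtain ⟨he2, he1⟩ := aux_he (|(m:ℝ)|) (ω' m) (C₁*ε) hM1 (by positivity) hεb.le hδl hδr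
  have hω2 : (Real.sqrt (1-ε))^2 = 1 - ε := Real.sq_sqrt (by linarith)
  rw [hω2, ← hNN] at hsmall
  obtain ⟨hs1, hs2⟩ := abs_lt.mp hsmall
  have hC12 : C₀/6 ≤ 1/12 := by linarith
  have hkey1 : |(n:ℝ)|^2 - |(m:ℝ)|^2 ≤ ε*|(n:ℝ)|^2 + 1/6 := by linarith [hs2, he2, hC12]
  have hkey2 : ε*|(n:ℝ)|^2 ≤ |(n:ℝ)|^2 - |(m:ℝ)|^2 + 1/6 := by linarith [hs1, he1, hC12]
  have hgap : |(n:ℝ)| + |(m:ℝ)| ≤ |(|(n:ℝ)|^2 - |(m:ℝ)|^2)| := by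
    have h := int_abs_sum_le n m hnm
    have h' : |(n:ℝ)| + |(m:ℝ)| ≤ |(n:ℝ)^2 - (m:ℝ)^2| := by exact_mod_cast h
    rwa [← hNN, ← hMM] at h'
  rcases abs_cases (|(n:ℝ)|^2 - |(m:ℝ)|^2) with ⟨heq, _⟩ | ⟨heq, _⟩
  swap
  · exfalso
    rw [heq] at hgap
    have hp : (0:ℝ) < ε*|(n:ℝ)|^2 :=
      mul_pos hε (pow_pos (lt_of_lt_of_le one_pos hN1) 2)
    linarith [hkey2, hgap, hM1, hN1]
  rw [heq] at hgap
  have hMN : |(m:ℝ)| < |(n:ℝ)| := aux_MN _ _ hM1 hN1 hgap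
  have hintMN : |m| + 1 ≤ |n| := by
    have h : |m| < |n| := by exact_mod_cast hMN
    omega
  have hN2 : (2:ℝ) ≤ |(n:ℝ)| := by
    have h2 : (2:ℤ) ≤ |n| := by have := Int.one_le_abs hm0; omega
    exact_mod_cast h2
  have hεN2 : |(n:ℝ)| + 5/6 ≤ ε*|(n:ℝ)|^2 := by linarith
  obtain ⟨hεN1, hεN1'⟩ := aux_eN _ _ hN2 hε hεN2
  have h2N : 1/(2*ε) < |(n:ℝ)| := by
    rw [div_lt_iff₀ (by positivity)]; linarith
  have h34 : (3/4) * |(n:ℝ)| < |(m:ℝ)| := aux_34 _ _ _ hM1 hN2 hε hεa hkey1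
  have h2M : 1/(2*ε) < |(m:ℝ)| := by
    rw [div_lt_iff₀ (by positivity)]; linarith [mul_lt_mul_of_pos_left h34 hε]
  refine ⟨⟨hMN, h34⟩, ⟨h2M, h2N⟩, ?_⟩
  have hsle : 1 - ε ≤ Real.sqrt (1-ε) := by
    have h := Real.sqrt_le_sqrt (show (1-ε)^2 ≤ 1-ε by
      linarith [mul_nonneg hε.le (by linarith : (0:ℝ) ≤ 1-ε)])
    rwa [Real.sqrt_sq (by linarith : (0:ℝ) ≤ 1-ε)] at h
  have ha : (1-ε)*|(n:ℝ)| ≤ Real.sqrt (1-ε) * |(n:ℝ)| :=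
    mul_le_mul_of_nonneg_right hsle (abs_nonneg _)
  have hεN' : ε*|(n:ℝ)| ≤ (1/100)*|(n:ℝ)| :=
    mul_le_mul_of_nonneg_right hεa.le (abs_nonneg _)
  have hb : |(m:ℝ)| - C₁*ε ≤ ω' m := by
    have hb' : C₁*ε/|(m:ℝ)| ≤ C₁*ε := div_le_self (by positivity) hM1
    linarith
  have hab : |(n:ℝ)| ≤ Real.sqrt (1-ε) * |(n:ℝ)| + ω' m := by
    linarith [ha, hεN', hb, h34, hN2, hεb]
  have habpos : 0 < Real.sqrt (1-ε) * |(n:ℝ)| + ω' m := by linarith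
  have hfac : |Real.sqrt (1-ε) * |(n:ℝ)| - ω' m| * (Real.sqrt (1-ε)*|(n:ℝ)| + ω' m)
      = |(1-ε) * |(n:ℝ)|^2 - (ω' m)^2| := by
    rw [← abs_of_pos habpos, ← abs_mul]
    congr 1
    linear_combination (|(n:ℝ)|^2) * hω2
  have hprod : |Real.sqrt (1-ε) * |(n:ℝ)| - ω' m| * (Real.sqrt (1-ε)*|(n:ℝ)| + ω' m)
      < C₀/6 := by rw [hfac]; exact hsmall
  rw [lt_div_iff₀ (by positivity : (0:ℝ) < 6 * |(n:ℝ)|)]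
  exact aux_final _ _ _ _ (abs_nonneg _) (by linarith) hab hprod
end
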